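/- For p ∈ (0, 1/2) and n ≥ 2, if b_{n+1} ≥ c_{n+1}, then |b_{n+1}/c_{n+1} - 1| ≤ (1-p)·|b_n/c_n - 1|, given b_n ≥ c_n > 0. -/

import Mathlib

theorem stmt_19 (p b c : ℝ) (hp : 0 < p) (hp' : p < 1/2) (hc : 0 < c) (hbc : c ≤ b)
    (d b' c' : ℝ)
    (hd : d = c*(2-p)*p + c^2*(1-2*p) + b^2*p*(2-3*p) + b*p*(3-4*p) + b*c*(2-6*p+6*p^2))
    (hb' : b' = p*(b*c*(2-3*p) + b^2*(1-p) + c^2*p) / d)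
    (hc' : c' = p*(b*c + c^2*(1-p) + b^2*(1-2*p)) / d)
    (h : c' ≤ b') :
    |b'/c' - 1| ≤ (1-p) * |b/c - 1| := by
  have hb : 0 < b := lt_of_lt_of_le hc hbc
  have hd0 : 0 < d := by
    have h12 : (0:ℝ) < 1 - 2*p := by linarith
    rw [hd]
    nlinarith [mul_nonneg (mul_pos hb hc).le (sq_nonneg (p - 1/2)), mul_pos hb hc,
      mul_pos (mul_pos hc hp) (by linarith : (0:ℝ) < 2 - p),
      mul_pos (mul_pos (mul_pos hb hb) hp) (by linarith : (0:ℝ) < 2 - 3*p),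
      mul_pos (mul_pos hb hp) (by linarith : (0:ℝ) < 3 - 4*p),
      mul_pos (mul_pos hc hc) h12]
  have hNc : 0 < b*c + c^2*(1-p) + b^2*(1-2*p) := by
    nlinarith [mul_pos hb hc, sq_nonneg b, sq_nonneg c]
  have hc'0 : 0 < c' := by
    rw [hc']; positivity
  have h1 : 0 ≤ b'/c' - 1 := by
    rw [sub_nonneg, le_div_iff₀ hc'0]; linarith
  have h2 : 0 ≤ b/c - 1 := by
    rw [sub_nonneg, le_div_iff₀ hc]; linarith
  rw [abs_of_nonneg h1, abs_of_nonneg h2]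
  have key : b'/c' = (b*c*(2-3*p) + b^2*(1-p) + c^2*p) / (b*c + c^2*(1-p) + b^2*(1-2*p)) := by
    have hdne : d ≠ 0 := ne_of_gt hd0
    have hpne : p ≠ 0 := ne_of_gt hp
    rw [hb', hc']
    field_simp
  rw [key, div_sub' (ne_of_gt hNc), div_sub' (ne_of_gt hc), ← mul_div_assoc,
    div_le_div_iff₀ hNc hc]
  have h12 : (0:ℝ) ≤ 1 - 2*p := by linarith
  have h1p : (0:ℝ) ≤ 1 - p := by linarith
  nlinarith [mul_nonneg (sub_nonneg.2 hbc)
    (by nlinarith [mul_nonneg (mul_pos hb hc).le h12,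
        mul_nonneg (mul_nonneg (sq_nonneg b) h12) h1p,
        mul_nonneg (sq_nonneg c) (sq_nonneg p)] :
      (0:ℝ) ≤ b*c*(1-2*p) + c^2*p^2 + b^2*(1-2*p)*(1-p)), mul_pos hb hc]
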